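/- Let G be a topological group acting by automorphisms on a group H. Among all group topologies on H for which the action map G × H → H is continuous, there exists a finest one (i.e., a group topology T(H,G) that is finer than every group topology on H making the action continuous, and which itself makes the action continuous). -/

import Mathlib

/-- There is a finest group topology on `H` making a given action of a topological
group `G` by automorphisms continuous. -/
theorem exists_finest_group_topology_continuous_action {G H : Type*} [Group G]
    [TopologicalSpace G] [IsTopologicalGroup G] [Group H] [MulDistribMulAction G H] :
    ∃ t : TopologicalSpace H, @IsTopologicalGroup H t _ ∧
      (@Continuous (G × H) H (@instTopologicalSpaceProd G H _ t) t fun p => p.1 • p.2) ∧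
      ∀ t' : TopologicalSpace H, @IsTopologicalGroup H t' _ →
        (@Continuous (G × H) H (@instTopologicalSpaceProd G H _ t') t' fun p => p.1 • p.2) →
        t ≤ t' := by
  set S : Set (GroupTopology H) :=
    {t | @Continuous (G × H) H (@instTopologicalSpaceProd G H _ t.toTopologicalSpace)
      t.toTopologicalSpace fun p => p.1 • p.2} with hS
  refine ⟨(sInf S).toTopologicalSpace, (sInf S).toIsTopologicalGroup, ?_, ?_⟩
  · rw [GroupTopology.toTopologicalSpace_sInf, continuous_sInf_rng]
    rintro t ⟨t', ht', rfl⟩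
    have h1 : @Continuous H H (sInf (GroupTopology.toTopologicalSpace '' S))
        t'.toTopologicalSpace id :=
      continuous_id_of_le (sInf_le ⟨t', ht', rfl⟩)
    have h2 : @Continuous (G × H) (G × H)
        (@instTopologicalSpaceProd G H _ (sInf (GroupTopology.toTopologicalSpace '' S)))
        (@instTopologicalSpaceProd G H _ t'.toTopologicalSpace) id :=
      continuous_id_of_le (le_inf inf_le_left
        (le_trans inf_le_right (induced_mono (sInf_le ⟨t', ht', rfl⟩))))
    exact @Continuous.comp (G × H) (G × H) H
      (@instTopologicalSpaceProd G H _ (sInf (GroupTopology.toTopologicalSpace '' S)))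
      (@instTopologicalSpaceProd G H _ t'.toTopologicalSpace) t'.toTopologicalSpace
      _ _ ht' h2
  · intro t' htg hc
    exact GroupTopology.toTopologicalSpace_le.2 (sInf_le (show (⟨t', htg⟩ : GroupTopology H) ∈ S from hc))
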